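/- Let q, t, b ∈ ℂ with 0 < |q| < 1, |t| < 1, and b q^n ≠ 1 for every integer n ≥ 0. Then (∏_{k=0}^{∞} (1 − t q^k)) · Σ_{n≥0} t^n / ((q;q)_n (1 − b q^n)) = Σ_{n≥0} (−t)^n b^n q^{n(n−1)/2} / (b;q)_{n+1}, both series converging absolutely. -/

import Mathlib

open Finset

/-- The q-Pochhammer symbol `(z;q)_n = ∏_{k=0}^{n-1} (1 - z q^k)`. -/
def qPoch (z q : ℂ) (n : ℕ) : ℂ := ∏ k ∈ Finset.range n, (1 - z * q ^ k)

open Filter Topology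

lemma qPoch_succ (z q : ℂ) (n : ℕ) : qPoch z q (n+1) = qPoch z q n * (1 - z * q ^ n) :=
  Finset.prod_range_succ _ _

lemma qPoch_succ' (z q : ℂ) (n : ℕ) : qPoch z q (n+1) = (1 - z) * qPoch (z*q) q n := by
  rw [qPoch, Finset.prod_range_succ']
  simp only [pow_zero, mul_one, qPoch]
  rw [mul_comm]
  congr 1
  exact Finset.prod_congr rfl fun k _ => by ring_nf

lemma one_sub_ne {x : ℂ} (h : ‖x‖ < 1) : (1 : ℂ) - x ≠ 0 := by
  intro h0
  have : x = 1 := by linear_combination -h0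
  rw [this] at h; simp at h

lemma qPochQ_ne {q : ℂ} (hq1 : ‖q‖ < 1) (n : ℕ) : qPoch q q n ≠ 0 := by
  apply Finset.prod_ne_zero_iff.2
  intro k _
  apply one_sub_ne
  rw [← pow_succ']
  calc ‖q ^ (k+1)‖ = ‖q‖ ^ (k+1) := by simp
  _ ≤ ‖q‖ ^ 1 := pow_le_pow_of_le_one (norm_nonneg q) hq1.le (by omega)
  _ < 1 := by simpa using hq1

lemma qPochB_ne {b q : ℂ} (hb : ∀ n : ℕ, b * q ^ n ≠ 1) (n : ℕ) : qPoch b q n ≠ 0 := by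
  apply Finset.prod_ne_zero_iff.2
  intro k _
  intro h0
  exact hb k (by linear_combination -h0)

lemma qPoch_lower {q : ℂ} (hq1 : ‖q‖ < 1) :
    ∃ c : ℝ, 0 < c ∧ ∀ n : ℕ, c ≤ ‖qPoch q q n‖ := by
  set r := ‖q‖ with hr
  have hr0 : 0 ≤ r := norm_nonneg q
  have h2 : (0:ℝ) < 1 - r := by linarith
  refine ⟨Real.exp (-(r / ((1-r)*(1-r)))), Real.exp_pos _, fun n => ?_⟩
  have step1 : ∏ k ∈ range n, (1 - r^(k+1)) ≤ ‖qPoch q q n‖ := by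
    rw [qPoch, norm_prod]
    apply Finset.prod_le_prod
    · intro k _
      have : r ^ (k+1) ≤ r ^ 1 := pow_le_pow_of_le_one hr0 hq1.le (by omega)
      simp at this; nlinarith
    · intro k _
      have h1 : ‖q * q ^ k‖ = r ^ (k+1) := by
        rw [← pow_succ']; simp [hr]
      calc 1 - r^(k+1) = ‖(1:ℂ)‖ - ‖q * q^k‖ := by rw [h1]; simp
      _ ≤ ‖1 - q * q^k‖ := by
          simpa using norm_sub_norm_le (1 : ℂ) (q * q^k)
  have step2 : ∀ k : ℕ, Real.exp (-(r^(k+1)/(1-r))) ≤ 1 - r^(k+1) := by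
    intro k
    have hs : r ^ (k+1) ≤ r := by simpa using pow_le_pow_of_le_one hr0 hq1.le (by omega : 1 ≤ k+1)
    have hs0 : 0 ≤ r ^ (k+1) := pow_nonneg hr0 _
    have h1 : (1:ℝ) + r^(k+1)/(1-r) ≤ Real.exp (r^(k+1)/(1-r)) := by
      have := Real.add_one_le_exp (r^(k+1)/(1-r)); linarith
    rw [Real.exp_neg, inv_le_comm₀ (Real.exp_pos _) (by nlinarith)]
    have hd : r^(k+1)/(1-r)*(1-r) = r^(k+1) := div_mul_cancel₀ _ (by linarith)
    have hd0 : 0 ≤ r^(k+1)/(1-r) := div_nonneg hs0 h2.le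
    have key : (1:ℝ) ≤ (1 + r^(k+1)/(1-r)) * (1 - r^(k+1)) := by
      nlinarith [mul_nonneg hd0 (by linarith : (0:ℝ) ≤ r - r^(k+1))]
    calc (1 - r^(k+1))⁻¹ ≤ 1 + r^(k+1)/(1-r) := by
          rw [inv_le_iff_one_le_mul₀ (by nlinarith)]
          nlinarith [key]
    _ ≤ Real.exp (r^(k+1)/(1-r)) := h1
  have hsum2 : (∑ k ∈ range n, r^(k+1)) * (1 - r) ≤ r := by
    have e1 : ∑ k ∈ range n, r^(k+1) = (∑ k ∈ range n, r^k) * r := by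
      rw [Finset.sum_mul]
      exact Finset.sum_congr rfl fun k _ => (pow_succ r k).symm
    have e2 : (∑ k ∈ range n, r^k) * (r - 1) = r^n - 1 := geom_sum_mul r n
    have : (0:ℝ) ≤ r ^ n := pow_nonneg hr0 n
    nlinarith [pow_le_one₀ hr0 hq1.le (n := n)]
  have step3 : Real.exp (-(r / ((1-r)*(1-r)))) ≤ ∏ k ∈ range n, (1 - r^(k+1)) := by
    calc Real.exp (-(r / ((1-r)*(1-r)))) ≤ Real.exp (-(∑ k ∈ range n, r^(k+1)/(1-r))) := by
          apply Real.exp_le_exp.2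
          rw [neg_le_neg_iff, ← Finset.sum_div, div_le_div_iff₀ h2 (by nlinarith)]
          nlinarith [mul_le_mul_of_nonneg_right hsum2 h2.le]
    _ = ∏ k ∈ range n, Real.exp (-(r^(k+1)/(1-r))) := by
          rw [← Real.exp_sum]; congr 1; rw [← Finset.sum_neg_distrib]
    _ ≤ ∏ k ∈ range n, (1 - r^(k+1)) := by
          apply Finset.prod_le_prod
          · intro k _; exact (Real.exp_pos _).le
          · intro k _; exact step2 k
  linarith

lemma summable_of_term_rec {f m : ℕ → ℂ} (hrec : ∀ n, f (n+1) = m n * f n)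
    {L : ℂ} (hL : ‖L‖ < 1) (hm : Tendsto m atTop (𝓝 L)) : Summable f := by
  apply summable_of_ratio_norm_eventually_le (r := (‖L‖ + 1)/2) (by linarith)
  have habs : Tendsto (fun n => ‖m n‖) atTop (𝓝 (‖L‖)) :=
    (continuous_norm.tendsto L).comp hm
  filter_upwards [habs.eventually_le_const (by linarith : ‖L‖ < (‖L‖ + 1)/2)]
    with n hn
  rw [hrec n]
  calc ‖m n * f n‖ = ‖m n‖ * ‖f n‖ := by
        simp
  _ ≤ (‖L‖ + 1)/2 * ‖f n‖ := mul_le_mul_of_nonneg_right hn (norm_nonneg _)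

section
variable {q t b : ℂ}

lemma abs_q_pow_lt (hq1 : ‖q‖ < 1) (n : ℕ) : ‖q * q ^ n‖ < 1 := by
  rw [← pow_succ']
  calc ‖q ^ (n+1)‖ = ‖q‖ ^ (n+1) := by simp
  _ ≤ ‖q‖ ^ 1 := pow_le_pow_of_le_one (norm_nonneg q) hq1.le (by omega)
  _ < 1 := by simpa using hq1

lemma tendsto_q_pow (hq1 : ‖q‖ < 1) : Tendsto (fun n : ℕ => q ^ n) atTop (𝓝 0) :=
  tendsto_pow_atTop_nhds_zero_of_norm_lt_one (by exact hq1)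

lemma sumB (hq1 : ‖q‖ < 1) (ht : ‖t‖ < 1) (hb : ∀ n : ℕ, b * q ^ n ≠ 1) :
    Summable (fun n : ℕ => t ^ n / (qPoch q q n * (1 - b * q ^ n))) := by
  have hq := tendsto_q_pow hq1
  apply summable_of_term_rec
    (m := fun n => t * (1 - b * q^n) / ((1 - q * q^n) * (1 - b * (q * q^n)))) (L := t)
  · intro n
    have h1 : qPoch q q (n+1) = qPoch q q n * (1 - q * q^n) := Finset.prod_range_succ _ _
    have h2 : qPoch q q n ≠ 0 := by
      apply Finset.prod_ne_zero_iff.2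
      intro k _; exact one_sub_ne (abs_q_pow_lt hq1 k)
    have h3 : (1 : ℂ) - q * q^n ≠ 0 := one_sub_ne (abs_q_pow_lt hq1 n)
    have h4 : (1 : ℂ) - b * q^n ≠ 0 := fun h => hb n (by linear_combination -h)
    have h5 : (1 : ℂ) - b * (q * q^n) ≠ 0 := fun h => hb (n+1) (by rw [pow_succ']; linear_combination -h)
    rw [h1, pow_succ' q n, div_mul_div_comm, div_eq_div_iff (by
      exact mul_ne_zero (mul_ne_zero h2 h3) h5) (by
      exact mul_ne_zero (mul_ne_zero h3 h5) (mul_ne_zero h2 h4))]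
    ring
  · exact ht
  · have hg : ContinuousAt (fun x : ℂ => t * (1 - b * x) / ((1 - q * x) * (1 - b * (q * x)))) 0 := by
      apply ContinuousAt.div (by fun_prop) (by fun_prop); norm_num
    have h0 : t * (1 - b * 0) / ((1 - q * 0) * (1 - b * (q * 0))) = t := by norm_num
    have := hg.tendsto.comp hq
    rw [h0] at this
    exact this

lemma sumA (hq1 : ‖q‖ < 1) (s : ℂ) :
    Summable (fun j : ℕ => (-1) ^ j * q ^ (j.choose 2) * s ^ j / qPoch q q j) := by
  have hq := tendsto_q_pow hq1
  apply summable_of_term_rec (m := fun j => -(s * q^j) / (1 - q * q^j)) (L := 0)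
  · intro j
    have h1 : qPoch q q (j+1) = qPoch q q j * (1 - q * q^j) := Finset.prod_range_succ _ _
    have h2 : qPoch q q j ≠ 0 := by
      apply Finset.prod_ne_zero_iff.2
      intro k _; exact one_sub_ne (abs_q_pow_lt hq1 k)
    have h3 : (1 : ℂ) - q * q^j ≠ 0 := one_sub_ne (abs_q_pow_lt hq1 j)
    have hc : (j+1).choose 2 = j.choose 2 + j := by
      rw [Nat.choose_succ_succ]; simp [Nat.choose_one_right]; omega
    rw [h1, hc, pow_add]
    field_simp
    ring
  · simp
  · have hg : ContinuousAt (fun x : ℂ => -(s * x) / (1 - q * x)) 0 := by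
      apply ContinuousAt.div (by fun_prop) (by fun_prop); norm_num
    have h0 : -(s * 0) / (1 - q * 0) = 0 := by norm_num
    have := hg.tendsto.comp hq
    rw [h0] at this
    exact this

lemma sumG (hq1 : ‖q‖ < 1) (hb : ∀ n : ℕ, b * q ^ n ≠ 1) :
    Summable (fun n : ℕ => (-t) ^ n * b ^ n * q ^ (n.choose 2) / qPoch b q (n + 1)) := by
  have hq := tendsto_q_pow hq1
  apply summable_of_term_rec (m := fun n => -(t * b * q^n) / (1 - b * (q * q^n))) (L := 0)
  · intro n
    have h1 : qPoch b q (n+2) = qPoch b q (n+1) * (1 - b * (q * q^n)) := by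
      rw [show qPoch b q (n+2) = qPoch b q (n+1) * (1 - b * q^(n+1)) from Finset.prod_range_succ _ _,
        pow_succ']
    have h2 : qPoch b q (n+1) ≠ 0 := by
      apply Finset.prod_ne_zero_iff.2
      intro k _; exact fun h => hb k (by linear_combination -h)
    have h5 : (1 : ℂ) - b * (q * q^n) ≠ 0 := fun h => hb (n+1) (by rw [pow_succ']; linear_combination -h)
    have hc : (n+1).choose 2 = n.choose 2 + n := by
      rw [Nat.choose_succ_succ]; simp [Nat.choose_one_right]; omega
    rw [show n+1+1 = n+2 from rfl, h1, hc, pow_add]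
    field_simp
    ring
  · simp
  · have hg : ContinuousAt (fun x : ℂ => -(t * b * x) / (1 - b * (q * x))) 0 := by
      apply ContinuousAt.div (by fun_prop) (by fun_prop); norm_num
    have h0 : -(t * b * 0) / (1 - b * (q * 0)) = 0 := by norm_num
    have := hg.tendsto.comp hq
    rw [h0] at this
    exact this
end

noncomputable def eulerE (q s : ℂ) : ℂ := ∑' j : ℕ, (-1) ^ j * q ^ (j.choose 2) * s ^ j / qPoch q q j

section
variable {q t : ℂ}

lemma eulerE_funEq (hq1 : ‖q‖ < 1) (s : ℂ) :
    eulerE q s = (1 - s) * eulerE q (s * q) := by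
  have hf := sumA hq1 s
  have hg := sumA hq1 (s * q)
  have hsub : (∑' j : ℕ, ((-1) ^ j * q ^ (j.choose 2) * s ^ j / qPoch q q j
      - (-1) ^ j * q ^ (j.choose 2) * (s*q) ^ j / qPoch q q j)) = eulerE q s - eulerE q (s*q) :=
    Summable.tsum_sub hf hg
  have hsum : Summable (fun j : ℕ => ((-1) ^ j * q ^ (j.choose 2) * s ^ j / qPoch q q j
      - (-1) ^ j * q ^ (j.choose 2) * (s*q) ^ j / qPoch q q j)) := hf.sub hg
  rw [Summable.tsum_eq_zero_add hsum] at hsub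
  have h0 : ((-1:ℂ) ^ 0 * q ^ (Nat.choose 0 2) * s ^ 0 / qPoch q q 0
      - (-1) ^ 0 * q ^ (Nat.choose 0 2) * (s*q) ^ 0 / qPoch q q 0) = 0 := by
    simp [qPoch]
  have hterm : ∀ j : ℕ, ((-1) ^ (j+1) * q ^ ((j+1).choose 2) * s ^ (j+1) / qPoch q q (j+1)
      - (-1) ^ (j+1) * q ^ ((j+1).choose 2) * (s*q) ^ (j+1) / qPoch q q (j+1))
      = (-s) * ((-1) ^ j * q ^ (j.choose 2) * (s*q) ^ j / qPoch q q j) := by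
    intro j
    have h1 : qPoch q q (j+1) = qPoch q q j * (1 - q * q^j) := Finset.prod_range_succ _ _
    have h2 : qPoch q q j ≠ 0 := qPochQ_ne hq1 j
    have h3 : (1 : ℂ) - q * q^j ≠ 0 := one_sub_ne (abs_q_pow_lt hq1 j)
    have hc : (j+1).choose 2 = j.choose 2 + j := by
      rw [Nat.choose_succ_succ]; simp [Nat.choose_one_right]; omega
    rw [h1, hc, pow_add]
    rw [div_sub_div_same, mul_div_assoc' (-s), div_eq_div_iff (mul_ne_zero h2 h3) h2]
    ring
  simp only [hterm, h0, zero_add] at hsub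
  rw [tsum_mul_left] at hsub
  have : eulerE q s - eulerE q (s*q) = -s * eulerE q (s*q) := by
    rw [← hsub]; rfl
  linear_combination this

lemma eulerE_iter (hq1 : ‖q‖ < 1) (t : ℂ) (N : ℕ) :
    eulerE q t = (∏ k ∈ range N, (1 - t * q ^ k)) * eulerE q (t * q ^ N) := by
  induction N with
  | zero => simp
  | succ N ih =>
    rw [ih, Finset.prod_range_succ, eulerE_funEq hq1 (t * q ^ N)]
    rw [mul_assoc (t) (q ^ N) q, ← pow_succ]
    ring
end

section
variable {q t : ℂ}

lemma eulerE_near_one (hq1 : ‖q‖ < 1) {c : ℝ} (hc : 0 < c)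
    (hcl : ∀ n : ℕ, c ≤ ‖qPoch q q n‖) {s : ℂ} (hs : ‖s‖ ≤ 1/2) :
    ‖eulerE q s - 1‖ ≤ 2/c * ‖s‖ := by
  set f : ℕ → ℂ := fun j => (-1) ^ j * q ^ (j.choose 2) * s ^ j / qPoch q q j with hfdef
  have hf : Summable f := sumA hq1 s
  have h0 : f 0 = 1 := by simp [hfdef, qPoch]
  have hE : eulerE q s - 1 = ∑' j : ℕ, f (j+1) := by
    rw [eulerE, Summable.tsum_eq_zero_add hf, h0]; ring
  rw [hE]
  have hfs : Summable (fun j => f (j+1)) := (summable_nat_add_iff 1).2 hf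
  have hnorm : ∀ j : ℕ, ‖f (j+1)‖ ≤ ‖s‖ / c * (1/2)^j := by
    intro j
    have h1 : ‖f (j+1)‖ = ‖q‖ ^ ((j+1).choose 2) * ‖s‖ ^ (j+1)
        / ‖qPoch q q (j+1)‖ := by
      simp [hfdef]
    rw [h1]
    have hb1 : ‖q‖ ^ ((j+1).choose 2) ≤ 1 :=
      pow_le_one₀ (norm_nonneg q) hq1.le
    have hb2 : ‖s‖ ^ (j+1) ≤ ‖s‖ * (1/2)^j := by
      rw [pow_succ']
      apply mul_le_mul_of_nonneg_left _ (norm_nonneg s)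
      exact pow_le_pow_left₀ (norm_nonneg s) hs j
    have hb3 : 1 / ‖qPoch q q (j+1)‖ ≤ 1/c := by
      apply one_div_le_one_div_of_le hc (hcl (j+1))
    calc ‖q‖ ^ ((j+1).choose 2) * ‖s‖ ^ (j+1) / ‖qPoch q q (j+1)‖
        ≤ 1 * (‖s‖ * (1/2)^j) / c := by
          apply div_le_div₀ (by positivity) _ hc (hcl (j+1))
          apply mul_le_mul hb1 hb2 (by positivity) (by norm_num)
    _ = ‖s‖ / c * (1/2)^j := by ring
  have hsum2 : Summable (fun j : ℕ => ‖s‖ / c * (1/2)^j) :=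
    (summable_geometric_of_lt_one (by norm_num) (by norm_num)).mul_left _
  calc ‖∑' j : ℕ, f (j+1)‖ ≤ ∑' j : ℕ, ‖f (j+1)‖ := by
        exact norm_tsum_le_tsum_norm (hsum2.of_nonneg_of_le (fun j => norm_nonneg _) hnorm)
  _ ≤ ∑' j : ℕ, ‖s‖ / c * (1/2)^j :=
        Summable.tsum_le_tsum hnorm (hsum2.of_nonneg_of_le (fun j => norm_nonneg _) hnorm) hsum2
  _ = 2/c * ‖s‖ := by
        rw [tsum_mul_left, tsum_geometric_of_lt_one (by norm_num) (by norm_num)]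
        norm_num; ring

lemma eulerE_tendsto_one (hq1 : ‖q‖ < 1) (t : ℂ) :
    Tendsto (fun N : ℕ => eulerE q (t * q ^ N)) atTop (𝓝 1) := by
  obtain ⟨c, hc, hcl⟩ := qPoch_lower hq1
  have hq := tendsto_q_pow hq1
  have htq : Tendsto (fun N : ℕ => t * q ^ N) atTop (𝓝 0) := by
    simpa using (tendsto_const_nhds (x := t)).mul hq
  have habs : Tendsto (fun N : ℕ => ‖t * q ^ N‖) atTop (𝓝 0) := by
    have h := (continuous_norm.tendsto 0).comp htq
    simp only [Function.comp_def, norm_zero] at h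
    exact h
  have hev : ∀ᶠ N : ℕ in atTop, ‖t * q ^ N‖ ≤ 1/2 :=
    habs.eventually_le_const (by norm_num)
  have hz : Tendsto (fun N : ℕ => eulerE q (t * q ^ N) - 1) atTop (𝓝 0) := by
    apply squeeze_zero_norm' (a := fun N => 2/c * ‖t * q ^ N‖)
    · filter_upwards [hev] with N hN
      simpa using eulerE_near_one hq1 hc hcl hN
    · simpa using (tendsto_const_nhds (x := (2/c : ℝ))).mul habs
  have := hz.add_const 1
  simpa using this

lemma euler_prod_eq (hq1 : ‖q‖ < 1) (ht : ‖t‖ < 1) :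
    Multipliable (fun k : ℕ => 1 - t * q ^ k) ∧
    (∏' k : ℕ, (1 - t * q ^ k)) = eulerE q t := by
  have habs : ∀ k : ℕ, ‖t * q ^ k‖ < 1 := by
    intro k
    calc ‖t * q ^ k‖ = ‖t‖ * ‖q‖ ^ k := by simp
    _ ≤ ‖t‖ * 1 := by
        apply mul_le_mul_of_nonneg_left (pow_le_one₀ (norm_nonneg q) hq1.le)
          (norm_nonneg t)
    _ < 1 := by simpa using ht
  have hne : ∀ k : ℕ, (1 : ℂ) - t * q ^ k ≠ 0 := fun k => one_sub_ne (habs k)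
  -- summability of logs
  set g : ℕ → ℂ := fun k => Complex.log (1 - t * q ^ k) with hgdef
  have habs2 : Tendsto (fun k : ℕ => ‖t * q ^ k‖) atTop (𝓝 0) := by
    have h1 : Tendsto (fun k : ℕ => t * q ^ k) atTop (𝓝 0) := by
      simpa using (tendsto_const_nhds (x := t)).mul (tendsto_q_pow hq1)
    have h := (continuous_norm.tendsto 0).comp h1
    simp only [Function.comp_def, norm_zero] at h
    exact h
  have hg : Summable g := by
    apply Summable.of_norm_bounded_eventually_nat
      (g := fun k => 3/2 * (‖t‖ * ‖q‖ ^ k))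
    · apply Summable.mul_left
      apply Summable.mul_left
      exact summable_geometric_of_lt_one (norm_nonneg q) hq1
    · filter_upwards [habs2.eventually_le_const (by norm_num : (0:ℝ) < 1/2)] with k hk
      have : ‖Complex.log (1 + (- (t * q ^ k)))‖ ≤ 3/2 * ‖- (t * q ^ k)‖ :=
        Complex.norm_log_one_add_half_le_self (by simpa using hk)
      simp only [norm_neg] at this
      calc ‖g k‖ = ‖Complex.log (1 + (- (t * q ^ k)))‖ := by
            simp only [hgdef, sub_eq_add_neg]
      _ ≤ 3/2 * ‖t * q ^ k‖ := this
      _ = 3/2 * (‖t‖ * ‖q‖ ^ k) := by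
            simp
  have hprod : HasProd (fun k : ℕ => 1 - t * q ^ k) (Complex.exp (∑' k, g k)) := by
    have h1 : HasProd (fun k => Complex.exp (g k)) (Complex.exp (∑' k, g k)) := hg.hasSum.cexp
    have h2 : (fun k : ℕ => Complex.exp (g k)) = (fun k : ℕ => 1 - t * q ^ k) := by
      funext k; exact Complex.exp_log (hne k)
    rwa [h2] at h1
  refine ⟨hprod.multipliable, ?_⟩
  have h3 : Tendsto (fun N : ℕ => ∏ k ∈ range N, (1 - t * q ^ k)) atTop
      (𝓝 (∏' k : ℕ, (1 - t * q ^ k))) := hprod.multipliable.hasProd.tendsto_prod_nat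
  have h4 : Tendsto (fun N : ℕ => (∏ k ∈ range N, (1 - t * q ^ k)) * eulerE q (t * q ^ N))
      atTop (𝓝 ((∏' k : ℕ, (1 - t * q ^ k)) * 1)) := h3.mul (eulerE_tendsto_one hq1 t)
  have h5 : (fun N : ℕ => (∏ k ∈ range N, (1 - t * q ^ k)) * eulerE q (t * q ^ N))
      = fun _ => eulerE q t := by
    funext N; exact (eulerE_iter hq1 t N).symm
  rw [h5] at h4
  have h6 := tendsto_nhds_unique h4 tendsto_const_nhds
  rw [mul_one] at h6
  exact h6
end

noncomputable def aS (q : ℂ) (j : ℕ) : ℂ := (-1)^j * q^(j.choose 2) / qPoch q q j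
noncomputable def cS (q z : ℂ) (m : ℕ) : ℂ := 1 / (qPoch q q m * (1 - z * q^m))

section
variable {q : ℂ}

lemma abs_pow_succ_lt (hq1 : ‖q‖ < 1) (n : ℕ) : ‖q ^ (n+1)‖ < 1 := by
  rw [pow_succ']; exact abs_q_pow_lt hq1 n

lemma choose_succ_two (j : ℕ) : (j+1).choose 2 = j.choose 2 + j := by
  rw [Nat.choose_succ_succ]; simp [Nat.choose_one_right]; omega

lemma cS_shift (hq1 : ‖q‖ < 1) {b : ℂ} (hb : ∀ m : ℕ, b * q ^ m ≠ 1) (m : ℕ) :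
    (1 - q^(m+1)) * cS q b (m+1) = cS q (b*q) m := by
  have hbq : ∀ k : ℕ, (b*q) * q ^ k ≠ 1 := by
    intro k h
    exact hb (k+1) (by rw [pow_succ']; linear_combination h)
  have e1 : qPoch q q (m+1) = qPoch q q m * (1 - q * q^m) := Finset.prod_range_succ _ _
  rw [cS, cS, mul_one_div, div_eq_div_iff (by
      exact mul_ne_zero (qPochQ_ne hq1 (m+1)) (fun h => hb (m+1) (by linear_combination -h))) (by
      exact mul_ne_zero (qPochQ_ne hq1 m) (fun h => hbq m (by linear_combination -h)))]
  rw [e1, pow_succ']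
  ring

lemma aS_shift (hq1 : ‖q‖ < 1) (j : ℕ) :
    (1 - q^(j+1)) * aS q (j+1) = -(q^j) * aS q j := by
  have hA := qPochQ_ne hq1 j
  have hB := one_sub_ne (abs_q_pow_lt hq1 j)
  have e1 : qPoch q q (j+1) = qPoch q q j * (1 - q * q^j) := Finset.prod_range_succ _ _
  rw [aS, aS, e1, choose_succ_two, pow_add, pow_succ']
  field_simp
  have hI : (1 - q * q ^ j) * (1 - q * q ^ j)⁻¹ = 1 := mul_inv_cancel₀ hB
  linear_combination (-(q ^ j * q ^ j.choose 2 * (-1) ^ j)) * hI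

lemma star (hq1 : ‖q‖ < 1) :
    ∀ (n : ℕ) (b : ℂ), (∀ m : ℕ, b * q ^ m ≠ 1) →
    ∑ j ∈ range (n+1), aS q j * cS q b (n-j)
      = (-1)^n * b^n * q^(n.choose 2) / qPoch b q (n+1) := by
  intro n
  induction n with
  | zero =>
    intro b hb
    simp [aS, cS, qPoch]
  | succ n IH =>
    intro b hb
    have hbq : ∀ m : ℕ, (b*q) * q ^ m ≠ 1 := by
      intro m h
      exact hb (m+1) (by rw [pow_succ']; linear_combination h)
    have h1b : (1:ℂ) - b ≠ 0 := fun h => hb 0 (by simpa using (by linear_combination -h : b = 1))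
    have h1q : (1:ℂ) - q^(n+1) ≠ 0 := one_sub_ne (abs_pow_succ_lt hq1 n)
    have key : (1 - q^(n+1)) * (∑ j ∈ range (n+2), aS q j * cS q b (n+1-j))
        = (∑ j ∈ range (n+1), aS q j * cS q (b*q) (n-j))
          - q^n * (∑ j ∈ range (n+1), aS q j * cS q b (n-j)) := by
      rw [Finset.mul_sum]
      have split : ∀ j ∈ range (n+2), (1 - q^(n+1)) * (aS q j * cS q b (n+1-j))
          = aS q j * ((1 - q^(n+1-j)) * cS q b (n+1-j))
            + (q^(n+1-j) * (1 - q^j)) * (aS q j * cS q b (n+1-j)) := by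
        intro j hj
        have hj' : j ≤ n+1 := by simpa [Nat.lt_succ_iff] using hj
        have hpow : q^(n+1-j) * q^j = q^(n+1) := by
          rw [← pow_add]; congr 1; omega
        linear_combination (aS q j * cS q b (n+1-j)) * hpow
      rw [Finset.sum_congr rfl split, Finset.sum_add_distrib]
      have sum1 : ∑ j ∈ range (n+2), aS q j * ((1 - q^(n+1-j)) * cS q b (n+1-j))
          = ∑ j ∈ range (n+1), aS q j * cS q (b*q) (n-j) := by
        rw [Finset.sum_range_succ]
        have hlast : aS q (n+1) * ((1 - q^(n+1-(n+1))) * cS q b (n+1-(n+1))) = 0 := by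
          simp
        rw [hlast, add_zero]
        apply Finset.sum_congr rfl
        intro j hj
        have hj' : j ≤ n := by simpa [Nat.lt_succ_iff] using hj
        have h1 : n+1-j = (n-j)+1 := by omega
        rw [h1, cS_shift hq1 hb (n-j)]
      have sum2 : ∑ j ∈ range (n+2), (q^(n+1-j) * (1 - q^j)) * (aS q j * cS q b (n+1-j))
          = -(q^n * ∑ j ∈ range (n+1), aS q j * cS q b (n-j)) := by
        rw [Finset.sum_range_succ']
        have hfirst : (q^(n+1-0) * (1 - q^(0:ℕ))) * (aS q 0 * cS q b (n+1-0)) = 0 := by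
          simp
        rw [hfirst, add_zero, Finset.mul_sum, ← Finset.sum_neg_distrib]
        apply Finset.sum_congr rfl
        intro j hj
        have hj' : j ≤ n := by simpa [Nat.lt_succ_iff] using hj
        have h1 : n+1-(j+1) = n-j := by omega
        have hp : q^(n-j) * q^j = q^n := by
          rw [← pow_add]; congr 1; omega
        have hA := aS_shift hq1 j
        rw [h1]
        linear_combination (q^(n-j) * cS q b (n-j)) * hA - (aS q j * cS q b (n-j)) * hp
      rw [sum1, sum2]
      ring
    rw [IH (b*q) hbq, IH b hb] at key
    have e1 : qPoch b q (n+2) = (1-b) * qPoch (b*q) q (n+1) := qPoch_succ' b q (n+1)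
    have e2 : qPoch b q (n+2) = qPoch b q (n+1) * (1 - b * q^(n+1)) := Finset.prod_range_succ _ _
    have hP1 : qPoch b q (n+1) ≠ 0 := qPochB_ne hb (n+1)
    have hP2 : qPoch (b*q) q (n+1) ≠ 0 := qPochB_ne hbq (n+1)
    have hP3 : qPoch b q (n+2) ≠ 0 := qPochB_ne hb (n+2)
    have hB1 : (1:ℂ) - b * q^(n+1) ≠ 0 := fun h => hb (n+1) (by linear_combination -h)
    have final : (1 - q^(n+1)) * ((-1)^(n+1) * b^(n+1) * q^((n+1).choose 2) / qPoch b q (n+2))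
        = (-1)^n * (b*q)^n * q^(n.choose 2) / qPoch (b*q) q (n+1)
          - q^n * ((-1)^n * b^n * q^(n.choose 2) / qPoch b q (n+1)) := by
      have aux1 : (-1:ℂ)^n * (b*q)^n * q^(n.choose 2) / qPoch (b*q) q (n+1)
          = ((-1)^n * (b*q)^n * q^(n.choose 2) * (1-b)) / qPoch b q (n+2) := by
        rw [e1, mul_comm (1-b) (qPoch (b*q) q (n+1)), mul_div_mul_right _ _ h1b]
      have aux2 : q^n * ((-1:ℂ)^n * b^n * q^(n.choose 2) / qPoch b q (n+1))
          = (q^n * ((-1)^n * b^n * q^(n.choose 2)) * (1 - b*q^(n+1))) / qPoch b q (n+2) := by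
        rw [e2, ← mul_div_assoc, mul_div_mul_right _ _ hB1]
      rw [aux1, aux2, mul_div_assoc', div_sub_div_same]
      congr 1
      rw [choose_succ_two, pow_add]
      ring
    rw [← final] at key
    exact mul_left_cancel₀ h1q key
end


/-- A specialization of an identity of Fine (p. 26, eq. (20.41) with `a = b/q`, `c = 0`):
`(t;q)_∞ Σ_{n≥0} t^n/((q;q)_n (1 − b q^n)) = Σ_{n≥0} (−t)^n b^n q^{n(n−1)/2}/(b;q)_{n+1}`. -/
theorem stmt11 (q t b : ℂ) (hq0 : 0 < ‖q‖) (hq1 : ‖q‖ < 1)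
    (ht : ‖t‖ < 1) (hb : ∀ n : ℕ, b * q ^ n ≠ 1) :
    Summable (fun n : ℕ => t ^ n / (qPoch q q n * (1 - b * q ^ n))) ∧
    Summable (fun n : ℕ => (-t) ^ n * b ^ n * q ^ (n * (n - 1) / 2) / qPoch b q (n + 1)) ∧
    (∏' k : ℕ, (1 - t * q ^ k)) *
        ∑' n : ℕ, t ^ n / (qPoch q q n * (1 - b * q ^ n)) =
      ∑' n : ℕ, (-t) ^ n * b ^ n * q ^ (n * (n - 1) / 2) / qPoch b q (n + 1) := by
  have hchoose : (fun n : ℕ => (-t) ^ n * b ^ n * q ^ (n * (n - 1) / 2) / qPoch b q (n + 1))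
      = fun n : ℕ => (-t) ^ n * b ^ n * q ^ (n.choose 2) / qPoch b q (n + 1) := by
    funext n; rw [Nat.choose_two_right]
  refine ⟨sumB hq1 ht hb, ?_, ?_⟩
  · rw [hchoose]; exact sumG hq1 hb
  · rw [show (∏' k : ℕ, (1 - t * q ^ k)) = eulerE q t from (euler_prod_eq hq1 ht).2]
    rw [eulerE]
    have hA : Summable (fun j : ℕ => ‖(-1) ^ j * q ^ (j.choose 2) * t ^ j / qPoch q q j‖) :=
      summable_norm_iff.mpr (sumA hq1 t)
    have hB : Summable (fun n : ℕ => ‖t ^ n / (qPoch q q n * (1 - b * q ^ n))‖) :=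
      summable_norm_iff.mpr (sumB hq1 ht hb)
    rw [tsum_mul_tsum_eq_tsum_sum_antidiagonal_of_summable_norm hA hB]
    rw [hchoose]
    apply tsum_congr
    intro n
    rw [Finset.Nat.sum_antidiagonal_eq_sum_range_succ_mk]
    have hpt : ∀ j ∈ range (n+1),
        (-1) ^ j * q ^ (j.choose 2) * t ^ j / qPoch q q j
          * (t ^ (n-j) / (qPoch q q (n-j) * (1 - b * q ^ (n-j))))
        = t^n * (aS q j * cS q b (n-j)) := by
      intro j hj
      have hj' : j ≤ n := by simpa [Nat.lt_succ_iff] using hj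
      have htn : t^j * t^(n-j) = t^n := by rw [← pow_add]; congr 1; omega
      rw [aS, cS, div_mul_div_comm, div_mul_div_comm, mul_div_assoc']
      congr 1
      linear_combination ((-1)^j * q^(j.choose 2)) * htn
    rw [Finset.sum_congr rfl hpt, ← Finset.mul_sum, star hq1 n b hb]
    rw [neg_pow]
    ring
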